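/- arXiv:1803.04812 — 4 statements merged into one kernel-verified Lean document; each statement's English description precedes it below -/
import Mathlib

section
/- Let T be a finite tree on vertex set V with a designated root node t and strictly positive edge weights r_e for each edge e. Let H be the reduced weighted Laplacian of T with edge weights 1/r_e, i.e., the matrix indexed by V \ {t} with H(a,a) = Σ_{b : (ab) an edge of T} 1/r_{ab}, H(a,b) = −1/r_{ab} if (ab) is an edge, and H(a,b) = 0 otherwise. Then H is invertible and for all non-root nodes a, b, the entry H⁻¹(a,b) equals Σ_{e ∈ P_{at} ∩ P_{bt}} r_e, the sum of the weights r_e over edges common to the unique path from a to t and the unique path from b to t. -/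
open SimpleGraph Finset

/-- The edge set of the unique path between two vertices of a tree. -/
noncomputable def pathEdges {V : Type} [DecidableEq V] {G : SimpleGraph V}
    (hG : G.IsTree) (a b : V) : Finset (Sym2 V) :=
  ((hG.existsUnique_path a b).choose.edges).toFinset

section Aux

set_option linter.unusedSectionVars false
set_option maxHeartbeats 1000000

variable {V : Type} [DecidableEq V] {G : SimpleGraph V} (hG : G.IsTree) (t : V)

/-- The chosen path from `a` to `t` in the tree. -/
noncomputable def twalk (a : V) : G.Walk a t := (hG.existsUnique_path a t).choose

lemma twalk_isPath (a : V) : (twalk hG t a).IsPath := (hG.existsUnique_path a t).choose_spec.1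

lemma twalk_unique {a : V} (p : G.Walk a t) (hp : p.IsPath) : p = twalk hG t a :=
  (hG.existsUnique_path a t).choose_spec.2 p hp

lemma pathEdges_eq_twalk (a : V) : pathEdges hG a t = (twalk hG t a).edges.toFinset := rfl

/-- The parent of a vertex: the second vertex on the chosen path to `t`. -/
noncomputable def par (a : V) : V := (twalk hG t a).getVert 1

lemma twalk_eq_cons {a : V} (ha : a ≠ t) :
    ∃ (h : G.Adj a (par hG t a)) (q : G.Walk (par hG t a) t),
      twalk hG t a = SimpleGraph.Walk.cons h q ∧ q = twalk hG t (par hG t a) ∧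
        a ∉ q.support := by
  obtain ⟨d, h, q, hq⟩ := SimpleGraph.Walk.exists_eq_cons_of_ne ha (twalk hG t a)
  have hd : par hG t a = d := by
    unfold par; rw [hq, SimpleGraph.Walk.getVert_cons_succ, SimpleGraph.Walk.getVert_zero]
  subst hd
  have hp := twalk_isPath hG t a
  rw [hq, SimpleGraph.Walk.cons_isPath_iff] at hp
  exact ⟨h, q, hq, twalk_unique hG t q hp.1, hp.2⟩

lemma pathEdges_self_root : pathEdges hG t t = ∅ := by
  have : (SimpleGraph.Walk.nil : G.Walk t t) = twalk hG t t :=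
    twalk_unique hG t _ SimpleGraph.Walk.IsPath.nil
  rw [pathEdges_eq_twalk, ← this]
  simp

lemma pathEdges_parent {a : V} (ha : a ≠ t) :
    pathEdges hG a t = insert s(a, par hG t a) (pathEdges hG (par hG t a) t) ∧
      s(a, par hG t a) ∉ pathEdges hG (par hG t a) t := by
  obtain ⟨h, q, hq, hq2, hq3⟩ := twalk_eq_cons hG t ha
  constructor
  · rw [pathEdges_eq_twalk, pathEdges_eq_twalk, hq, ← hq2, SimpleGraph.Walk.edges_cons,
      List.toFinset_cons]
  · rw [pathEdges_eq_twalk, ← hq2, List.mem_toFinset]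
    intro hmem
    exact hq3 (q.fst_mem_support_of_mem_edges hmem)

/-- A neighbor of `a` which is not its parent is not on the path from `a` to `t`. -/
lemma not_mem_support_of_ne_par {a c : V} (ha : a ≠ t) (h : G.Adj a c)
    (hc : c ≠ par hG t a) : c ∉ (twalk hG t a).support := by
  intro hmem
  obtain ⟨h', q, hq, hq2, hq3⟩ := twalk_eq_cons hG t ha
  have htake : ((twalk hG t a).takeUntil c hmem).IsPath := (twalk_isPath hG t a).takeUntil hmem
  have hsingle : (SimpleGraph.Walk.cons h SimpleGraph.Walk.nil).IsPath := by
    simp [SimpleGraph.Walk.cons_isPath_iff, h.ne]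
  have := (hG.existsUnique_path a c).unique htake hsingle
  have hedge : s(a, c) ∈ (twalk hG t a).edges := by
    have hsub := (twalk hG t a).edges_takeUntil_subset hmem
    apply hsub
    rw [this]
    simp
  rw [hq, SimpleGraph.Walk.edges_cons] at hedge
  rcases List.mem_cons.1 hedge with heq | hmem'
  · rcases Sym2.eq_iff.1 heq with ⟨-, h2⟩ | ⟨h1, h2⟩
    · exact hc h2
    · exact h.ne h2.symm
  · exact hq3 (q.fst_mem_support_of_mem_edges hmem')

lemma pathEdges_child {a c : V} (ha : a ≠ t) (h : G.Adj a c) (hc : c ≠ par hG t a) :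
    pathEdges hG c t = insert s(a, c) (pathEdges hG a t) ∧
      s(a, c) ∉ pathEdges hG a t := by
  have hns := not_mem_support_of_ne_par hG t ha h hc
  have hcons : (SimpleGraph.Walk.cons h.symm (twalk hG t a)).IsPath :=
    (twalk_isPath hG t a).cons hns
  have := twalk_unique hG t _ hcons
  constructor
  · rw [pathEdges_eq_twalk, pathEdges_eq_twalk, ← this, SimpleGraph.Walk.edges_cons,
      List.toFinset_cons, Sym2.eq_swap]
  · rw [pathEdges_eq_twalk, List.mem_toFinset]
    intro hmem
    exact hns ((twalk hG t a).snd_mem_support_of_mem_edges hmem)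

variable [Fintype V] [DecidableRel G.Adj]

lemma key_lemma {a : V} :
    ∀ {x u : V} (p : G.Walk x u), p.IsPath → a ≠ u →
      (∑ c : V, (if G.Adj a c then
          (if c = par hG u a then (1:ℝ) else -1) *
            (if s(a,c) ∈ p.edges then 1 else 0) else 0)) = if x = a then 1 else 0 := by
  intro x u p
  induction p with
  | nil =>
    intro _ ha
    simp only [SimpleGraph.Walk.edges_nil, List.not_mem_nil, if_false, mul_zero, ite_self,
      Finset.sum_const_zero]
    rw [if_neg (fun h => ha h.symm)]
  | @cons x d u hxd q ih =>
    intro hp ha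
    have hp' := (SimpleGraph.Walk.cons_isPath_iff _ _).1 hp
    have hsplit : ∀ c : V,
        (if G.Adj a c then (if c = par hG u a then (1:ℝ) else -1) *
            (if s(a,c) ∈ (SimpleGraph.Walk.cons hxd q).edges then 1 else 0) else 0) =
          (if G.Adj a c then (if c = par hG u a then (1:ℝ) else -1) *
            (if s(a,c) = s(x,d) then 1 else 0) else 0) +
          (if G.Adj a c then (if c = par hG u a then (1:ℝ) else -1) *
            (if s(a,c) ∈ q.edges then 1 else 0) else 0) := by
      intro c
      by_cases hadj : G.Adj a c
      · by_cases h1 : s(a,c) = s(x,d)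
        · have h2 : s(x,d) ∉ q.edges := fun hmem =>
            hp'.2 (q.fst_mem_support_of_mem_edges hmem)
          simp [hadj, h1, h2, SimpleGraph.Walk.edges_cons]
        · simp [hadj, h1, SimpleGraph.Walk.edges_cons]
      · simp [hadj]
    rw [Finset.sum_congr rfl (fun c _ => hsplit c), Finset.sum_add_distrib,
      ih hp'.1 ha]
    by_cases hxa : x = a
    · subst hxa
      have htw : SimpleGraph.Walk.cons hxd q = twalk hG u x := twalk_unique hG u _ hp
      have hd : par hG u x = d := by
        unfold par
        rw [← htw, SimpleGraph.Walk.getVert_cons_succ, SimpleGraph.Walk.getVert_zero]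
      have hsum : ∀ c : V,
          (if G.Adj x c then (if c = par hG u x then (1:ℝ) else -1) *
            (if s(x,c) = s(x,d) then 1 else 0) else 0) = if c = d then 1 else 0 := by
        intro c
        by_cases hc : c = d
        · subst hc
          simp [hxd, hd]
        · by_cases hadj : G.Adj x c
          · have : s(x,c) ≠ s(x,d) := by
              intro he
              rcases Sym2.eq_iff.1 he with ⟨-, h2⟩ | ⟨h1, h2⟩
              · exact hc h2
              · exact hadj.ne h2.symm
            simp [hadj, this, hc]
          · simp [hadj, hc]
      rw [Finset.sum_congr rfl (fun c _ => hsum c), Finset.sum_ite_eq' Finset.univ d]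
      simp [hxd.ne']
    · by_cases hda : d = a
      · subst hda
        have hq : q = twalk hG u d := twalk_unique hG u q hp'.1
        obtain ⟨h', q', hq', -, -⟩ := twalk_eq_cons hG u ha
        have hpar_mem : par hG u d ∈ (twalk hG u d).support := by
          rw [hq']
          simp [SimpleGraph.Walk.support_cons, q'.start_mem_support]
        have hxpar : x ≠ par hG u d := by
          intro he
          apply hp'.2
          rw [← hq, ← he] at hpar_mem
          exact hpar_mem
        have hsum : ∀ c : V,
            (if G.Adj d c then (if c = par hG u d then (1:ℝ) else -1) *
              (if s(d,c) = s(x,d) then 1 else 0) else 0) = if c = x then -1 else 0 := by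
          intro c
          by_cases hc : c = x
          · subst hc
            simp [hxd.symm, hxpar, Sym2.eq_swap]
          · by_cases hadj : G.Adj d c
            · have : s(d,c) ≠ s(x,d) := by
                intro he
                rcases Sym2.eq_iff.1 he with ⟨h1, -⟩ | ⟨-, h2⟩
                · exact hxa h1.symm
                · exact hc h2
              simp [hadj, this, hc]
            · simp [hadj, hc]
        rw [Finset.sum_congr rfl (fun c _ => hsum c), Finset.sum_ite_eq' Finset.univ x]
        simp [hxa]
      · have hsum : ∀ c : V,
            (if G.Adj a c then (if c = par hG u a then (1:ℝ) else -1) *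
              (if s(a,c) = s(x,d) then 1 else 0) else 0) = 0 := by
          intro c
          by_cases hadj : G.Adj a c
          · have : s(a,c) ≠ s(x,d) := by
              intro he
              rcases Sym2.eq_iff.1 he with ⟨h1, -⟩ | ⟨h1, -⟩
              · exact hxa h1.symm
              · exact hda h1.symm
            simp [hadj, this]
          · simp [hadj]
        rw [Finset.sum_congr rfl (fun c _ => hsum c)]
        simp [hxa, hda]

end Aux

set_option maxHeartbeats 1000000 in
/-- For a finite tree `G` with root `t` and strictly positive edge
weights `r`, the reduced weighted Laplacian `H` with edge weights `1/r` is invertible,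
and `H⁻¹ a b` equals the sum of the weights `r e` over the edges common to the path
from `a` to `t` and the path from `b` to `t`. -/
theorem reduced_laplacian_inverse_eq_common_path_sum
    {V : Type} [Fintype V] [DecidableEq V] (G : SimpleGraph V) [DecidableRel G.Adj]
    (hG : G.IsTree) (t : V) (r : Sym2 V → ℝ) (hr : ∀ e ∈ G.edgeSet, 0 < r e)
    (H : Matrix {v : V // v ≠ t} {v : V // v ≠ t} ℝ)
    (hH : ∀ a b : {v : V // v ≠ t},
      H a b =
        if (a : V) = (b : V) then
          ∑ c : V, (if G.Adj (a : V) c then 1 / r s((a : V), c) else 0)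
        else
          if G.Adj (a : V) (b : V) then -(1 / r s((a : V), (b : V))) else 0) :
    IsUnit H.det ∧
      ∀ a b : {v : V // v ≠ t},
        H⁻¹ a b = ∑ e ∈ pathEdges hG (a : V) t ∩ pathEdges hG (b : V) t, r e := by
  set M : Matrix {v : V // v ≠ t} {v : V // v ≠ t} ℝ :=
    Matrix.of fun c b => ∑ e ∈ pathEdges hG (c : V) t ∩ pathEdges hG (b : V) t, r e with hM
  have hmain : H * M = 1 := by
    ext a b
    rw [Matrix.mul_apply, Matrix.one_apply]
    set Mv : V → ℝ := fun v => ∑ e ∈ pathEdges hG v t ∩ pathEdges hG (b : V) t, r e with hMv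
    have hMc : ∀ c : {v : V // v ≠ t}, M c b = Mv (c : V) := fun c => rfl
    set D : ℝ := ∑ c : V, (if G.Adj (a : V) c then 1 / r s((a : V), c) else 0) with hD
    set F : V → ℝ := fun c => (if G.Adj (a : V) c then -(1 / r s((a : V), c)) else 0) * Mv c
      with hF
    have hFa : F (a : V) = 0 := by simp [hF, G.irrefl]
    have hFt : F t = 0 := by
      have : Mv t = 0 := by
        simp [hMv, pathEdges_self_root, Finset.empty_inter]
      simp [hF, this]
    -- Step A : rewrite the matrix product entry
    have hA : ∑ c : {v : V // v ≠ t}, H a c * M c b = D * Mv (a : V) + ∑ c : V, F c := by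
      have h1 : ∀ c : {v : V // v ≠ t},
          H a c * M c b = (if c = a then D * Mv (a : V) else 0) + F (c : V) := by
        intro c
        rw [hH a c, hMc]
        by_cases hc : c = a
        · subst hc
          rw [if_pos rfl, if_pos rfl, hFa, add_zero, hD]
        · have hne : (a : V) ≠ (c : V) := fun h => hc (Subtype.ext h.symm)
          rw [if_neg hne, if_neg hc, zero_add, hF]
      rw [Finset.sum_congr rfl (fun c _ => h1 c), Finset.sum_add_distrib,
        Finset.sum_ite_eq' Finset.univ a]
      simp only [Finset.mem_univ, if_true]
      congr 1
      have h2 : ∑ c : {v : V // v ≠ t}, F (c : V) = ∑ c ∈ Finset.univ.erase t, F c := by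
        rw [Finset.sum_subtype (p := fun v => v ≠ t) (Finset.univ.erase t) (fun x => by simp) F]
      rw [h2, Finset.sum_erase _ hFt]
    rw [hA]
    -- Step B : combine into a single sum and compare with the key lemma
    have hB : D * Mv (a : V) + ∑ c : V, F c =
        ∑ c : V, (if G.Adj (a : V) c then
          (if c = par hG t (a : V) then (1:ℝ) else -1) *
            (if s((a : V), c) ∈ (twalk hG t (b : V)).edges then 1 else 0) else 0) := by
      rw [hD, Finset.sum_mul, ← Finset.sum_add_distrib]
      refine Finset.sum_congr rfl fun c _ => ?_
      by_cases hadj : G.Adj (a : V) c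
      · have he : s((a : V), c) ∈ G.edgeSet := (G.mem_edgeSet).2 hadj
        have hre : r s((a : V), c) ≠ 0 := (hr _ he).ne'
        have hmemiff : s((a : V), c) ∈ (twalk hG t (b : V)).edges ↔
            s((a : V), c) ∈ pathEdges hG (b : V) t := by
          rw [pathEdges_eq_twalk, List.mem_toFinset]
        rw [if_pos hadj, hF]
        simp only [if_pos hadj]
        by_cases hc : c = par hG t (a : V)
        · obtain ⟨hins, hnm⟩ := pathEdges_parent hG t a.2
          rw [← hc] at hins hnm
          have hMva : Mv (a : V) =
              Mv c + (if s((a : V), c) ∈ pathEdges hG (b : V) t then r s((a : V), c) else 0) := by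
            rw [hMv]
            simp only [hins]
            by_cases hmem : s((a : V), c) ∈ pathEdges hG (b : V) t
            · rw [Finset.insert_inter_of_mem hmem, Finset.sum_insert
                (fun hx => hnm (Finset.mem_inter.1 hx).1), if_pos hmem, add_comm]
            · rw [Finset.insert_inter_of_notMem hmem, if_neg hmem, add_zero]
          rw [hMva, if_pos hc]
          by_cases hmem : s((a : V), c) ∈ pathEdges hG (b : V) t
          · rw [if_pos hmem, if_pos (hmemiff.2 hmem)]
            field_simp
            ring
          · rw [if_neg hmem, if_neg (fun h => hmem (hmemiff.1 h))]
            ring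
        · obtain ⟨hins, hnm⟩ := pathEdges_child hG t a.2 hadj hc
          have hMvc : Mv c =
              Mv (a : V) +
                (if s((a : V), c) ∈ pathEdges hG (b : V) t then r s((a : V), c) else 0) := by
            rw [hMv]
            simp only [hins]
            by_cases hmem : s((a : V), c) ∈ pathEdges hG (b : V) t
            · rw [Finset.insert_inter_of_mem hmem, Finset.sum_insert
                (fun hx => hnm (Finset.mem_inter.1 hx).1), if_pos hmem, add_comm]
            · rw [Finset.insert_inter_of_notMem hmem, if_neg hmem, add_zero]
          rw [hMvc, if_neg hc]
          by_cases hmem : s((a : V), c) ∈ pathEdges hG (b : V) t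
          · rw [if_pos hmem, if_pos (hmemiff.2 hmem)]
            field_simp
            ring
          · rw [if_neg hmem, if_neg (fun h => hmem (hmemiff.1 h))]
            ring
      · rw [if_neg hadj, hF]
        simp [hadj]
    rw [hB, key_lemma hG (twalk hG t (b : V)) (twalk_isPath hG t (b : V)) a.2]
    by_cases hab : a = b
    · subst hab
      simp
    · rw [if_neg (fun h : (b : V) = (a : V) => hab (Subtype.ext h.symm)), if_neg hab]
  exact ⟨Matrix.isUnit_det_of_right_inverse hmain,
    fun a b => by rw [Matrix.inv_eq_right_inv hmain]; rfl⟩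
end

section
/- Under the linear coupled power flow model on a rooted tree, if a and b are two leaf nodes sharing a common parent k₁, then the variance of the voltage difference φ_{ab} := E[(v_a − v_b)²] satisfies φ_{ab} = r_{a k₁}² E[p_a²] + x_{a k₁}² E[q_a²] + 2 r_{a k₁} x_{a k₁} E[p_a q_a] + r_{k₁ b}² E[p_b²] + x_{k₁ b}² E[q_b²] + 2 r_{k₁ b} x_{k₁ b} E[p_b q_b]. -/
open SimpleGraph Finset MeasureTheory

/-- The vertices (support) of the unique path between two vertices of a tree. -/
noncomputable def pathSupport {V : Type} {G : SimpleGraph V}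
    (hG : G.IsTree) (a b : V) : List V :=
  (hG.existsUnique_path a b).choose.support

section AuxGraph
variable {V : Type} [Fintype V] [DecidableEq V] {G : SimpleGraph V} [DecidableRel G.Adj]

omit [DecidableEq V] in
lemma uniq_nbr_aux {a k₁ w : V} (hdeg : G.degree a = 1) (hak : G.Adj a k₁)
    (haw : G.Adj a w) : w = k₁ := by
  have h1 : k₁ ∈ G.neighborFinset a := by simp [hak]
  have h2 : w ∈ G.neighborFinset a := by simp [haw]
  exact Finset.card_le_one.mp (le_of_eq (by rw [G.card_neighborFinset_eq_degree, hdeg])) w h2 k₁ h1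

omit [DecidableEq V] [DecidableRel G.Adj] in
lemma leaf_not_mem_support_aux {a k₁ : V} [Fintype V] [DecidableRel G.Adj]
    (hdeg : G.degree a = 1) (hak : G.Adj a k₁)
    {t : V} (ht : t ≠ a) {c : V} (w : G.Walk c t) (hw : w.IsPath) (hc : c ≠ a) :
    a ∉ w.support := by
  induction w with
  | nil => simpa using fun h => hc h.symm
  | @cons u d e h w' ih =>
    rw [SimpleGraph.Walk.cons_isPath_iff] at hw
    rw [SimpleGraph.Walk.support_cons]
    simp only [List.mem_cons]
    rintro (h1 | hmem)
    · exact hc h1.symm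
    · by_cases hd : d = a
      · subst hd
        have hu : u = k₁ := uniq_nbr_aux hdeg hak h.symm
        cases w' with
        | nil => exact ht rfl
        | @cons _ y _ h₂ w₂ =>
          have hy : y = k₁ := uniq_nbr_aux hdeg hak h₂
          apply hw.2
          rw [SimpleGraph.Walk.support_cons]
          right
          rw [hu, ← hy]
          exact SimpleGraph.Walk.start_mem_support w₂
      · exact ih ht hw.1 hd hmem

lemma pathEdges_leaf_aux {a k₁ t : V} (hG : G.IsTree) (hdeg : G.degree a = 1)
    (hak : G.Adj a k₁) (hat : a ≠ t) :
    pathEdges hG a t = insert s(a, k₁) (pathEdges hG k₁ t) := by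
  have hP : (hG.existsUnique_path k₁ t).choose.IsPath := (hG.existsUnique_path k₁ t).choose_spec.1
  have hna : a ∉ (hG.existsUnique_path k₁ t).choose.support :=
    leaf_not_mem_support_aux hdeg hak hat.symm _ hP hak.ne'
  have hW : (SimpleGraph.Walk.cons hak (hG.existsUnique_path k₁ t).choose).IsPath :=
    hP.cons hna
  have := (hG.existsUnique_path a t).choose_spec.2 _ hW
  unfold pathEdges
  rw [← this, SimpleGraph.Walk.edges_cons, List.toFinset_cons]

lemma pathEdges_not_mem_aux {a k₁ t c : V} (hG : G.IsTree) (hdeg : G.degree a = 1)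
    (hak : G.Adj a k₁) (hat : a ≠ t) (hca : c ≠ a) :
    s(a, k₁) ∉ pathEdges hG c t := by
  intro hmem
  rw [pathEdges, List.mem_toFinset] at hmem
  exact leaf_not_mem_support_aux hdeg hak hat.symm _ (hG.existsUnique_path c t).choose_spec.1 hca
    (SimpleGraph.Walk.fst_mem_support_of_mem_edges _ hmem)

end AuxGraph

section AuxMeasure
variable {Ω : Type} {mΩ : MeasurableSpace Ω} {μ : Measure Ω}

lemma l2_mul_integrable_aux {f g : Ω → ℝ} (hf : MemLp f 2 μ) (hg : MemLp g 2 μ) :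
    Integrable (fun ω => f ω * g ω) μ := by
  have h1 := hf.integrable_sq
  have h2 := hg.integrable_sq
  refine Integrable.mono' ((h1.add h2).const_mul (1/2)) (hf.1.mul hg.1) ?_
  filter_upwards with ω
  rw [Real.norm_eq_abs, abs_mul]; simp only [Pi.add_apply]
  nlinarith [sq_nonneg (|f ω| - |g ω|), sq_abs (f ω), sq_abs (g ω), abs_nonneg (f ω),
    abs_nonneg (g ω)]

lemma sum_mul_sum_integral_aux {n : ℕ} (c : Fin n → ℝ) (u : Fin n → Ω → ℝ)
    (hu : ∀ i, MemLp (u i) 2 μ) :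
    ∫ ω, (∑ i, c i * u i ω) * (∑ j, c j * u j ω) ∂μ
      = ∑ i, ∑ j, c i * c j * ∫ ω, u i ω * u j ω ∂μ := by
  have hint : ∀ i j : Fin n, Integrable (fun ω => c i * c j * (u i ω * u j ω)) μ :=
    fun i j => (l2_mul_integrable_aux (hu i) (hu j)).const_mul _
  calc ∫ ω, (∑ i, c i * u i ω) * (∑ j, c j * u j ω) ∂μ
      = ∫ ω, ∑ i, ∑ j, c i * c j * (u i ω * u j ω) ∂μ := by
        congr 1; funext ω
        rw [Finset.sum_mul_sum]
        exact Finset.sum_congr rfl fun i _ => Finset.sum_congr rfl fun j _ => by ring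
    _ = ∑ i, ∑ j, ∫ ω, c i * c j * (u i ω * u j ω) ∂μ := by
        rw [integral_finset_sum _ fun i _ => integrable_finset_sum _ fun j _ => hint i j]
        exact Finset.sum_congr rfl fun i _ => integral_finset_sum _ fun j _ => hint i j
    _ = ∑ i, ∑ j, c i * c j * ∫ ω, u i ω * u j ω ∂μ :=
        Finset.sum_congr rfl fun i _ => Finset.sum_congr rfl fun j _ => integral_const_mul _ _

end AuxMeasure

/-- Under the LC-PF model, if `a` and `b` are two leaf nodes sharing a
common parent `k₁`, then the variance of the voltage difference `φ_{ab} = E[(v_a − v_b)²]`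
equals `r_{ak₁}² E[p_a²] + x_{ak₁}² E[q_a²] + 2 r_{ak₁} x_{ak₁} E[p_a q_a]
+ r_{k₁b}² E[p_b²] + x_{k₁b}² E[q_b²] + 2 r_{k₁b} x_{k₁b} E[p_b q_b]`. -/
theorem lcpf_sibling_leaf_voltage_difference_variance
    {V : Type} [Fintype V] [DecidableEq V] (G : SimpleGraph V) [DecidableRel G.Adj]
    (hG : G.IsTree) (t : V) (r x : Sym2 V → ℝ)
    (Hr Hx : {v : V // v ≠ t} → {v : V // v ≠ t} → ℝ)
    (hHr : ∀ a b : {v : V // v ≠ t},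
      Hr a b = ∑ e ∈ pathEdges hG (a : V) t ∩ pathEdges hG (b : V) t, r e)
    (hHx : ∀ a b : {v : V // v ≠ t},
      Hx a b = ∑ e ∈ pathEdges hG (a : V) t ∩ pathEdges hG (b : V) t, x e)
    (Ω : Type) (mΩ : MeasurableSpace Ω) (μ : Measure Ω) [IsProbabilityMeasure μ]
    (p q : {v : V // v ≠ t} → Ω → ℝ)
    (hpL2 : ∀ a, MemLp (p a) 2 μ) (hqL2 : ∀ a, MemLp (q a) 2 μ)
    (hpmean : ∀ a, ∫ ω, p a ω ∂μ = 0) (hqmean : ∀ a, ∫ ω, q a ω ∂μ = 0)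
    (huncorr : ∀ a b, a ≠ b →
      (∫ ω, p a ω * p b ω ∂μ = 0) ∧ (∫ ω, q a ω * q b ω ∂μ = 0) ∧
        (∫ ω, p a ω * q b ω ∂μ = 0))
    (v : {v : V // v ≠ t} → Ω → ℝ)
    (hv : ∀ a ω, v a ω = ∑ c, (Hr a c * p c ω + Hx a c * q c ω))
    -- `a` and `b` are distinct leaf nodes with common parent `k₁`
    (a b : {v : V // v ≠ t}) (k₁ : V) (hab : a ≠ b)
    (haleaf : G.degree (a : V) = 1) (hbleaf : G.degree (b : V) = 1)
    (hak : G.Adj (a : V) k₁) (hka : k₁ ∈ pathSupport hG (a : V) t)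
    (hbk : G.Adj (b : V) k₁) (hkb : k₁ ∈ pathSupport hG (b : V) t) :
    ∫ ω, (v a ω - v b ω) ^ 2 ∂μ =
      (r s((a : V), k₁)) ^ 2 * ∫ ω, (p a ω) ^ 2 ∂μ
        + (x s((a : V), k₁)) ^ 2 * ∫ ω, (q a ω) ^ 2 ∂μ
        + 2 * r s((a : V), k₁) * x s((a : V), k₁) * ∫ ω, p a ω * q a ω ∂μ
        + (r s(k₁, (b : V))) ^ 2 * ∫ ω, (p b ω) ^ 2 ∂μ
        + (x s(k₁, (b : V))) ^ 2 * ∫ ω, (q b ω) ^ 2 ∂μ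
        + 2 * r s(k₁, (b : V)) * x s(k₁, (b : V)) * ∫ ω, p b ω * q b ω ∂μ := by
  have hswap : s(k₁, (b : V)) = s((b : V), k₁) := Sym2.eq_swap
  set ea : Sym2 V := s((a : V), k₁) with hea_def
  set eb : Sym2 V := s((b : V), k₁) with heb_def
  have habV : (a : V) ≠ (b : V) := fun h => hab (Subtype.ext h)
  have hEa : pathEdges hG (a : V) t = insert ea (pathEdges hG k₁ t) :=
    pathEdges_leaf_aux hG haleaf hak a.2
  have hEb : pathEdges hG (b : V) t = insert eb (pathEdges hG k₁ t) :=
    pathEdges_leaf_aux hG hbleaf hbk b.2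
  have hea_not : ∀ c : V, c ≠ (a : V) → ea ∉ pathEdges hG c t :=
    fun c hc => pathEdges_not_mem_aux hG haleaf hak a.2 hc
  have heb_not : ∀ c : V, c ≠ (b : V) → eb ∉ pathEdges hG c t :=
    fun c hc => pathEdges_not_mem_aux hG hbleaf hbk b.2 hc
  -- Structure of the rows of Hr, Hx
  have key : ∀ (y : Sym2 V → ℝ) (c : {v : V // v ≠ t}),
      (∑ e ∈ pathEdges hG (a : V) t ∩ pathEdges hG (c : V) t, y e)
        = (if c = a then y ea else 0)
          + ∑ e ∈ pathEdges hG k₁ t ∩ pathEdges hG (c : V) t, y e := by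
    intro y c
    by_cases hc : c = a
    · subst hc
      rw [if_pos rfl, hEa, Finset.inter_self,
        Finset.sum_insert (hea_not k₁ hak.ne'),
        Finset.inter_eq_left.mpr (Finset.subset_insert _ _)]
    · rw [if_neg hc, zero_add, hEa,
        Finset.insert_inter_of_notMem (hea_not _ (fun h => hc (Subtype.ext h)))]
  have keyb : ∀ (y : Sym2 V → ℝ) (c : {v : V // v ≠ t}),
      (∑ e ∈ pathEdges hG (b : V) t ∩ pathEdges hG (c : V) t, y e)
        = (if c = b then y eb else 0)
          + ∑ e ∈ pathEdges hG k₁ t ∩ pathEdges hG (c : V) t, y e := by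
    intro y c
    by_cases hc : c = b
    · subst hc
      rw [if_pos rfl, hEb, Finset.inter_self,
        Finset.sum_insert (heb_not k₁ hbk.ne'),
        Finset.inter_eq_left.mpr (Finset.subset_insert _ _)]
    · rw [if_neg hc, zero_add, hEb,
        Finset.insert_inter_of_notMem (heb_not _ (fun h => hc (Subtype.ext h)))]
  set cf : Fin 4 → ℝ := ![r ea, x ea, -(r eb), -(x eb)] with hcf
  set u : Fin 4 → Ω → ℝ := ![p a, q a, p b, q b] with hu
  have hkey : ∀ ω, v a ω - v b ω = ∑ i, cf i * u i ω := by
    intro ω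
    rw [hv, hv, ← Finset.sum_sub_distrib]
    have hterm : ∀ c : {v : V // v ≠ t},
        (Hr a c * p c ω + Hx a c * q c ω) - (Hr b c * p c ω + Hx b c * q c ω)
          = (if c = a then r ea * p c ω + x ea * q c ω else 0)
            - (if c = b then r eb * p c ω + x eb * q c ω else 0) := by
      intro c
      rw [hHr a c, hHr b c, hHx a c, hHx b c, key r c, keyb r c, key x c, keyb x c]
      split_ifs <;> ring
    rw [Finset.sum_congr rfl fun c _ => hterm c, Finset.sum_sub_distrib,
      Finset.sum_ite_eq' Finset.univ a, Finset.sum_ite_eq' Finset.univ b]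
    simp only [Finset.mem_univ, if_true, hcf, hu, Fin.sum_univ_four,
      Matrix.cons_val_zero, Matrix.cons_val_one, Matrix.head_cons,
      Matrix.cons_val_two, Matrix.tail_cons, Matrix.cons_val_three]
    ring
  have huL2 : ∀ i, MemLp (u i) 2 μ := by
    intro i
    fin_cases i <;>
      simp only [hu, Matrix.cons_val_zero, Matrix.cons_val_one, Matrix.head_cons,
        Matrix.cons_val_two, Matrix.tail_cons, Matrix.cons_val_three]
    exacts [hpL2 a, hqL2 a, hpL2 b, hqL2 b]
  have hint : ∫ ω, (v a ω - v b ω) ^ 2 ∂μ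
      = ∫ ω, (∑ i, cf i * u i ω) * (∑ j, cf j * u j ω) ∂μ := by
    congr 1; funext ω; rw [hkey ω]; ring
  rw [hint, sum_mul_sum_integral_aux cf u huL2]
  -- zero integrals
  obtain ⟨hpp, hqq, hpq⟩ := huncorr a b hab
  obtain ⟨hpp', hqq', hpq'⟩ := huncorr b a hab.symm
  have comm : ∀ f g : Ω → ℝ, ∫ ω, f ω * g ω ∂μ = ∫ ω, g ω * f ω ∂μ := by
    intro f g; congr 1; funext ω; ring
  have hsq : ∀ f : Ω → ℝ, ∫ ω, f ω * f ω ∂μ = ∫ ω, (f ω) ^ 2 ∂μ := by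
    intro f; congr 1; funext ω; ring
  have hqp : ∫ ω, q a ω * p b ω ∂μ = 0 := by rw [comm]; exact hpq'
  have hqp2 : ∫ ω, q b ω * p a ω ∂μ = 0 := by rw [comm]; exact hpq
  have hqpa : ∫ ω, q a ω * p a ω ∂μ = ∫ ω, p a ω * q a ω ∂μ := comm _ _
  have hqpb : ∫ ω, q b ω * p b ω ∂μ = ∫ ω, p b ω * q b ω ∂μ := comm _ _
  have hppc : ∫ ω, p b ω * p a ω ∂μ = 0 := hpp'
  have hqqc : ∫ ω, q b ω * q a ω ∂μ = 0 := hqq'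
  simp only [Fin.sum_univ_four, hcf, hu,
    Matrix.cons_val_zero, Matrix.cons_val_one, Matrix.head_cons,
    Matrix.cons_val_two, Matrix.tail_cons, Matrix.cons_val_three]
  rw [hsq (p a), hsq (q a), hsq (p b), hsq (q b), hpp, hqq, hpq, hpp', hqq', hpq', hqp, hqp2,
    hqpa, hqpb, hswap]
  ring
end

section
/- Let T be a finite tree on vertex set V with at least 3 nodes and strictly positive edge weights w_e, and let d(a,b) = Σ_{e ∈ P_{ab}} w_e be the induced additive tree metric. For distinct nodes a, b define Φ_{abc} := d(a,c) − d(b,c) for c ∈ V \ {a,b}. Then Φ_{abc} = d(a,b) for all c ∈ V \ {a,b} if and only if a is a leaf node and b is adjacent to a (b is the parent of leaf a). -/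
open SimpleGraph Finset

lemma pathEdges_eq {V : Type} [DecidableEq V] {G : SimpleGraph V}
    (hG : G.IsTree) {a b : V} (p : G.Walk a b) (hp : p.IsPath) :
    pathEdges hG a b = p.edges.toFinset := by
  unfold pathEdges
  rw [← (hG.existsUnique_path a b).choose_spec.2 p hp]

lemma walk_decomp {V : Type} {G : SimpleGraph V} {u v : V} (p : G.Walk u v) (h : u ≠ v) :
    ∃ (x : V) (ha : G.Adj u x) (q : G.Walk x v), p = SimpleGraph.Walk.cons ha q := by
  cases p with
  | nil => exact absurd rfl h
  | cons ha q => exact ⟨_, ha, q, rfl⟩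

lemma leaf_not_mem_support {V : Type} [DecidableEq V] {G : SimpleGraph V} {a b c : V}
    (p : G.Walk b c) (hp : p.IsPath)
    (huniq : ∀ x, G.Adj a x → x = b) (hca : c ≠ a) : a ∉ p.support := by
  intro hmem
  obtain ⟨x, hax, r', hr'⟩ := walk_decomp (p.dropUntil a hmem) hca.symm
  have hxb : x = b := huniq x hax
  have hbtail : b ∈ (p.dropUntil a hmem).support.tail := by
    rw [hr']
    simp [← hxb, SimpleGraph.Walk.start_mem_support]
  have hbtake : b ∈ (p.takeUntil a hmem).support := SimpleGraph.Walk.start_mem_support _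
  have hnodup := hp.support_nodup
  rw [← SimpleGraph.Walk.take_spec p hmem, SimpleGraph.Walk.support_append] at hnodup
  exact (List.disjoint_of_nodup_append hnodup) hbtake hbtail

/-- In a finite tree with at least 3 nodes and positive edge weights,
with `d` the induced additive tree metric and `Φ_{abc} = d(a,c) − d(b,c)`, one has
`Φ_{abc} = d(a,b)` for all `c ∉ {a,b}` iff `a` is a leaf and `b` is its parent
(i.e. `b` is adjacent to `a`). -/
theorem tree_metric_parent_child_characterization
    {V : Type} [Fintype V] [DecidableEq V] (G : SimpleGraph V) [DecidableRel G.Adj]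
    (hG : G.IsTree) (hcard : 3 ≤ Fintype.card V)
    (w : Sym2 V → ℝ) (hw : ∀ e ∈ G.edgeSet, 0 < w e)
    (d : V → V → ℝ) (hd : ∀ a b : V, d a b = ∑ e ∈ pathEdges hG a b, w e)
    (a b : V) (hab : a ≠ b) :
    (∀ c : V, c ≠ a → c ≠ b → d a c - d b c = d a b) ↔
      (G.degree a = 1 ∧ G.Adj a b) := by
  -- generic formula: d over a concrete path
  have dval : ∀ (u v : V) (p : G.Walk u v), p.IsPath → d u v = ∑ e ∈ p.edges.toFinset, w e := by
    intro u v p hp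
    rw [hd, pathEdges_eq hG p hp]
  -- single edge value
  have dedge : ∀ (u v : V) (h : G.Adj u v), d u v = w s(u, v) := by
    intro u v h
    have hp : (SimpleGraph.Walk.cons h SimpleGraph.Walk.nil).IsPath := by
      simp [SimpleGraph.Walk.cons_isPath_iff, h.ne]
    rw [dval u v _ hp]
    simp
  constructor
  · -- condition → leaf & adjacency
    intro hcond
    obtain ⟨p, hp, -⟩ := hG.existsUnique_path a b
    obtain ⟨x, hax, q, rfl⟩ := walk_decomp p hab
    rw [SimpleGraph.Walk.cons_isPath_iff] at hp
    obtain ⟨hq, hnaq⟩ := hp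
    have hxb : x = b := by
      by_contra hxb
      have hxa : x ≠ a := hax.ne'
      have hc := hcond x hxa hxb
      -- d a x = w s(a,x)
      have h1 : d a x = w s(a, x) := dedge a x hax
      -- d b x = sum over q.edges
      have h2 : d b x = ∑ e ∈ q.edges.toFinset, w e := by
        rw [dval b x q.reverse hq.reverse]
        simp [SimpleGraph.Walk.edges_reverse]
      -- d a b = w s(a,x) + sum over q.edges
      have hnotin : s(a, x) ∉ q.edges.toFinset := by
        intro hmem
        rw [List.mem_toFinset] at hmem
        exact hnaq (q.fst_mem_support_of_mem_edges hmem)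
      have h3 : d a b = w s(a, x) + ∑ e ∈ q.edges.toFinset, w e := by
        rw [dval a b _ ((SimpleGraph.Walk.cons_isPath_iff hax q).2 ⟨hq, hnaq⟩)]
        simp only [SimpleGraph.Walk.edges_cons, List.toFinset_cons]
        rw [Finset.sum_insert hnotin]
      -- the sum is positive since q is nonempty
      obtain ⟨y, hay, q', rfl⟩ := walk_decomp q hxb
      have hpos : 0 < ∑ e ∈ (SimpleGraph.Walk.cons hay q').edges.toFinset, w e := by
        apply Finset.sum_pos
        · intro e he
          exact hw e ((SimpleGraph.Walk.cons hay q').edges_subset_edgeSet (List.mem_toFinset.mp he))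
        · exact ⟨s(x, y), by simp⟩
      rw [h1, h2, h3] at hc
      linarith
    rw [hxb] at hax
    refine ⟨?_, hax⟩
    -- degree a = 1
    have huniq : ∀ y, G.Adj a y → y = b := by
      intro y hay
      by_contra hyb
      have hya : y ≠ a := hay.ne'
      have hc := hcond y hya hyb
      have h1 : d a y = w s(a, y) := dedge a y hay
      have h3 : d a b = w s(a, b) := dedge a b hax
      -- d b y = w s(b,a) + w s(a,y)  via path b → a → y
      have hpy : (SimpleGraph.Walk.cons hax.symm
          (SimpleGraph.Walk.cons hay SimpleGraph.Walk.nil)).IsPath := by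
        rw [SimpleGraph.Walk.cons_isPath_iff]
        constructor
        · rw [SimpleGraph.Walk.cons_isPath_iff]
          exact ⟨SimpleGraph.Walk.IsPath.nil, by simp [hay.ne]⟩
        · simp only [SimpleGraph.Walk.support_cons, SimpleGraph.Walk.support_nil,
            List.mem_cons, List.mem_singleton]
          intro hmem
          rcases hmem with h | h | h
          · exact hab h.symm
          · exact hyb h.symm
          · exact absurd h List.not_mem_nil
      have h2 : d b y = w s(b, a) + w s(a, y) := by
        rw [dval b y _ hpy]
        have hne : s(b, a) ≠ s(a, y) := by
          intro h
          rw [Sym2.eq_iff] at h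
          rcases h with ⟨h1, -⟩ | ⟨h1, -⟩
          · exact hab h1.symm
          · exact hyb h1.symm
        simp only [SimpleGraph.Walk.edges_cons, SimpleGraph.Walk.edges_nil,
          List.toFinset_cons, List.toFinset_nil, insert_empty_eq]
        rw [Finset.sum_insert (by simp [hne])]
        simp
      have hba : s(b, a) = s(a, b) := Sym2.eq_swap
      have hwpos : 0 < w s(a, b) := hw _ hax
      rw [h1, h2, h3, hba] at hc
      linarith
    have hbmem : b ∈ G.neighborFinset a := by
      rw [SimpleGraph.mem_neighborFinset]; exact hax
    rw [← SimpleGraph.card_neighborFinset_eq_degree]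
    rw [Finset.card_eq_one]
    refine ⟨b, Finset.eq_singleton_iff_unique_mem.mpr ⟨hbmem, fun y hy => ?_⟩⟩
    rw [SimpleGraph.mem_neighborFinset] at hy
    exact huniq y hy
  · -- leaf & adjacency → condition
    rintro ⟨hdeg, hadj⟩ c hca hcb
    have huniq : ∀ y, G.Adj a y → y = b := by
      intro y hay
      have h1 : (G.neighborFinset a).card = 1 := by
        rwa [SimpleGraph.card_neighborFinset_eq_degree]
      obtain ⟨z, hz⟩ := Finset.card_eq_one.mp h1
      have hyz : y = z := by
        have hm : y ∈ G.neighborFinset a := by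
          rw [SimpleGraph.mem_neighborFinset]; exact hay
        rw [hz, Finset.mem_singleton] at hm; exact hm
      have hbz : b = z := by
        have hm : b ∈ G.neighborFinset a := by
          rw [SimpleGraph.mem_neighborFinset]; exact hadj
        rw [hz, Finset.mem_singleton] at hm; exact hm
      rw [hyz, hbz]
    obtain ⟨p, hp, -⟩ := hG.existsUnique_path b c
    have hnmem : a ∉ p.support := leaf_not_mem_support p hp huniq hca
    have hpath : (SimpleGraph.Walk.cons hadj p).IsPath :=
      (SimpleGraph.Walk.cons_isPath_iff hadj p).2 ⟨hp, hnmem⟩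
    have hnotin : s(a, b) ∉ p.edges.toFinset := by
      intro hmem
      rw [List.mem_toFinset] at hmem
      exact hnmem (p.fst_mem_support_of_mem_edges hmem)
    have h1 : d a c = w s(a, b) + ∑ e ∈ p.edges.toFinset, w e := by
      rw [dval a c _ hpath]
      simp only [SimpleGraph.Walk.edges_cons, List.toFinset_cons]
      rw [Finset.sum_insert hnotin]
    have h2 : d b c = ∑ e ∈ p.edges.toFinset, w e := dval b c p hp
    have h3 : d a b = w s(a, b) := dedge a b hadj
    rw [h1, h2, h3]
    ring
end

section
/- Let T be a finite tree on vertex set V with at least 3 nodes and strictly positive edge weights w_e, and let d(a,b) = Σ_{e ∈ P_{ab}} w_e be the induced additive tree metric. For distinct nodes a, b define Φ_{abc} := d(a,c) − d(b,c) for c ∈ V \ {a,b}. Then the conditions −d(a,b) < Φ_{abc} < d(a,b) and Φ_{abc} = Φ_{abc'} for all c, c' ∈ V \ {a,b} hold if and only if both a and b are leaf nodes and they have a common neighbor (i.e., a and b are siblings with the same parent). -/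
open SimpleGraph Finset

section Aux

variable {V : Type} [DecidableEq V] {G : SimpleGraph V} (hG : G.IsTree)
  {w : Sym2 V → ℝ} {d : V → V → ℝ}

/-- The distance equals the weight-sum along any path. -/
lemma d_eq_walk (hd : ∀ a b : V, d a b = ∑ e ∈ pathEdges hG a b, w e)
    {u v : V} (q : G.Walk u v) (hq : q.IsPath) :
    d u v = (q.edges.map w).sum := by
  have h := (hG.existsUnique_path u v).choose_spec
  have hq' : q = (hG.existsUnique_path u v).choose := h.2 q hq
  rw [hd, pathEdges, ← hq', List.sum_toFinset _ hq.edges_nodup]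

lemma d_self (hd : ∀ a b : V, d a b = ∑ e ∈ pathEdges hG a b, w e) (u : V) :
    d u u = 0 := by
  have := d_eq_walk hG hd (Walk.nil : G.Walk u u) (Walk.IsPath.nil)
  simpa using this

lemma d_symm (hd : ∀ a b : V, d a b = ∑ e ∈ pathEdges hG a b, w e) (u v : V) :
    d u v = d v u := by
  obtain ⟨p, hp, -⟩ := hG.existsUnique_path u v
  rw [d_eq_walk hG hd p hp, d_eq_walk hG hd p.reverse hp.reverse,
    Walk.edges_reverse, List.map_reverse, List.sum_reverse]

lemma d_pos (hw : ∀ e ∈ G.edgeSet, 0 < w e)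
    (hd : ∀ a b : V, d a b = ∑ e ∈ pathEdges hG a b, w e)
    {u v : V} (huv : u ≠ v) : 0 < d u v := by
  obtain ⟨p, hp, -⟩ := hG.existsUnique_path u v
  rw [d_eq_walk hG hd p hp]
  cases p with
  | nil => exact absurd rfl huv
  | cons h q =>
    rename_i x
    rw [Walk.edges_cons, List.map_cons, List.sum_cons]
    have h1 : 0 < w s(u, x) := hw _ (G.mem_edgeSet.mpr h)
    have h2 : 0 ≤ (q.edges.map w).sum := by
      apply List.sum_nonneg
      intro y hy
      obtain ⟨e, he, rfl⟩ := List.mem_map.mp hy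
      exact le_of_lt (hw _ (q.edges_subset_edgeSet he))
    linarith

lemma d_split (hd : ∀ a b : V, d a b = ∑ e ∈ pathEdges hG a b, w e)
    {u v m : V} (q : G.Walk u v) (hq : q.IsPath) (hm : m ∈ q.support) :
    d u v = d u m + d m v := by
  rw [d_eq_walk hG hd q hq, d_eq_walk hG hd _ (hq.takeUntil hm),
    d_eq_walk hG hd _ (hq.dropUntil hm)]
  conv_lhs => rw [← Walk.take_spec q hm]
  rw [Walk.edges_append, List.map_append, List.sum_append]

lemma adj_unique {a x y : V} [Fintype V] [DecidableRel G.Adj]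
    (hdeg : G.degree a = 1) (h1 : G.Adj a x) (h2 : G.Adj a y) : x = y := by
  obtain ⟨z, hz⟩ := Finset.card_eq_one.mp hdeg
  have hx := (G.mem_neighborFinset a x).2 h1
  have hy := (G.mem_neighborFinset a y).2 h2
  rw [hz, Finset.mem_singleton] at hx hy
  rw [hx, hy]

/-- distance from a leaf: `d a c = w(a,h) + d h c` where `h` is the unique neighbor. -/
lemma d_leaf [Fintype V] [DecidableRel G.Adj]
    (hd : ∀ a b : V, d a b = ∑ e ∈ pathEdges hG a b, w e)
    {a h c : V} (hdeg : G.degree a = 1) (hah : G.Adj a h) (hc : c ≠ a) :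
    d a c = w s(a, h) + d h c := by
  obtain ⟨p, hp, -⟩ := hG.existsUnique_path a c
  cases p with
  | nil => exact absurd rfl hc.symm
  | cons adj q =>
    rename_i x
    have hx : x = h := adj_unique hdeg adj hah
    subst hx
    rw [d_eq_walk hG hd _ hp, Walk.edges_cons, List.map_cons, List.sum_cons,
      d_eq_walk hG hd q hp.of_cons]

end Aux

/-- In a finite tree with at least 3 nodes and positive edge weights,
with `d` the induced additive tree metric and `Φ_{abc} = d(a,c) − d(b,c)`, the
conditions `−d(a,b) < Φ_{abc} < d(a,b)` and `Φ_{abc} = Φ_{abc'}` for all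
`c, c' ∉ {a,b}` hold iff `a` and `b` are both leaves with a common neighbor
(siblings with the same parent). -/
theorem tree_metric_sibling_characterization
    {V : Type} [Fintype V] [DecidableEq V] (G : SimpleGraph V) [DecidableRel G.Adj]
    (hG : G.IsTree) (hcard : 3 ≤ Fintype.card V)
    (w : Sym2 V → ℝ) (hw : ∀ e ∈ G.edgeSet, 0 < w e)
    (d : V → V → ℝ) (hd : ∀ a b : V, d a b = ∑ e ∈ pathEdges hG a b, w e)
    (a b : V) (hab : a ≠ b) :
    ((∀ c : V, c ≠ a → c ≠ b → -(d a b) < d a c - d b c ∧ d a c - d b c < d a b) ∧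
      (∀ c c' : V, c ≠ a → c ≠ b → c' ≠ a → c' ≠ b →
        d a c - d b c = d a c' - d b c')) ↔
      (G.degree a = 1 ∧ G.degree b = 1 ∧ ∃ h : V, G.Adj a h ∧ G.Adj b h) := by
  constructor
  · rintro ⟨H1, H2⟩
    obtain ⟨p, hp, hu⟩ := hG.existsUnique_path a b
    cases p with
    | nil => exact absurd rfl hab
    | cons adj1 q =>
      rename_i x
      have hq : q.IsPath := hp.of_cons
      have haq : a ∉ q.support := ((Walk.cons_isPath_iff adj1 q).mp hp).2
      cases q with
      | nil =>
        -- a and b are adjacent: derive a contradiction using any third vertex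
        exfalso
        have hdab : d a b = w s(a, b) := by
          rw [d_eq_walk hG hd _ hp]; simp
        have hex : ∃ c : V, c ≠ a ∧ c ≠ b := by
          by_contra hcon
          push_neg at hcon
          have hsub : (Finset.univ : Finset V) ⊆ {a, b} := by
            intro c _
            by_cases hca : c = a
            · simp [hca]
            · simp [hcon c hca]
          have := Finset.card_le_card hsub
          rw [Finset.card_univ] at this
          have h2 : ({a, b} : Finset V).card ≤ 2 := by
            apply le_trans (Finset.card_insert_le _ _); simp
          omega
        obtain ⟨c, hca, hcb⟩ := hex
        obtain ⟨r, hr, -⟩ := hG.existsUnique_path a c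
        by_cases hbr : b ∈ r.support
        · have hsplit := d_split hG hd r hr hbr
          have := (H1 c hca hcb).2
          linarith
        · have hr' : (Walk.cons adj1.symm r).IsPath := hr.cons hbr
          have h1 : d b c = w s(b, a) + (r.edges.map w).sum := by
            rw [d_eq_walk hG hd _ hr', Walk.edges_cons, List.map_cons, List.sum_cons]
          have h2 : d a c = (r.edges.map w).sum := d_eq_walk hG hd r hr
          have hswap : s(b, a) = s(a, b) := Sym2.eq_swap
          rw [hswap] at h1
          have := (H1 c hca hcb).1
          linarith
      | cons adj2 q' =>
        rename_i y
        have hq' : q'.IsPath := hq.of_cons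
        have hxq' : x ∉ q'.support := ((Walk.cons_isPath_iff adj2 q').mp hq).2
        have hxa : x ≠ a := adj1.ne'
        have hxb : x ≠ b := by
          rintro rfl
          exact hxq' q'.end_mem_support
        have hya : y ≠ a := by
          rintro rfl
          apply haq
          rw [Walk.support_cons]
          exact List.mem_cons_of_mem _ q'.start_mem_support
        by_cases hyb : y = b
        · -- MAIN CASE: the path is a - x - b (here b has been renamed y by subst)
          subst hyb
          have hq'nil : q' = Walk.nil := Walk.isPath_iff_eq_nil.mp hq'
          subst hq'nil
          have hdab : d a y = w s(a, x) + w s(x, y) := by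
            rw [d_eq_walk hG hd _ hp]
            simp only [Walk.edges_cons, Walk.edges_nil, List.map_cons,
              List.map_nil, List.sum_cons, List.sum_nil]
            ring
          have hnab : ¬ G.Adj a y := by
            intro hadj
            have hpath : (Walk.cons hadj Walk.nil : G.Walk a y).IsPath := by
              rw [Walk.cons_isPath_iff]
              exact ⟨Walk.IsPath.nil, by simp [hab]⟩
            have := hu _ hpath
            have hlen := congrArg Walk.length this
            simp [Walk.length_cons] at hlen
          have hw1 : 0 < w s(a, x) := hw _ (G.mem_edgeSet.mpr adj1)
          have hw2 : 0 < w s(x, y) := hw _ (G.mem_edgeSet.mpr adj2)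
          -- degree a = 1
          have keya : ∀ z, G.Adj a z → z = x := by
            intro z hz
            by_contra hzx
            have hza : z ≠ a := hz.ne'
            have hzb : z ≠ y := by rintro rfl; exact hnab hz
            have hW : (Walk.cons adj2.symm (Walk.cons adj1.symm
                (Walk.cons hz Walk.nil)) : G.Walk y z).IsPath := by
              rw [Walk.isPath_def]
              simp [Walk.support_cons, adj2.ne', Ne.symm hab, Ne.symm hzb, hxa,
                Ne.symm hzx, hz.ne]
            have h1 : d y z = w s(y, x) + (w s(x, a) + (w s(a, z) + 0)) := by
              rw [d_eq_walk hG hd _ hW]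
              simp only [Walk.edges_cons, Walk.edges_nil, List.map_cons,
                List.map_nil, List.sum_cons, List.sum_nil]
            have hW2 : (Walk.cons hz Walk.nil : G.Walk a z).IsPath := by
              rw [Walk.cons_isPath_iff]
              exact ⟨Walk.IsPath.nil, by simp [hz.ne]⟩
            have h2 : d a z = w s(a, z) := by
              rw [d_eq_walk hG hd _ hW2]
              simp
            have e1 : w s(y, x) = w s(x, y) := by rw [Sym2.eq_swap]
            have e2 : w s(x, a) = w s(a, x) := by rw [Sym2.eq_swap]
            have := (H1 z hza hzb).1
            linarith
          have hdega : G.degree a = 1 := by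
            rw [← G.card_neighborFinset_eq_degree]
            rw [show G.neighborFinset a = {x} from
              Finset.eq_singleton_iff_unique_mem.2
                ⟨(G.mem_neighborFinset a x).2 adj1,
                 fun z hzm => keya z ((G.mem_neighborFinset a z).1 hzm)⟩]
            simp
          -- degree b = 1
          have keyb : ∀ z, G.Adj y z → z = x := by
            intro z hz
            by_contra hzx
            have hzb : z ≠ y := hz.ne'
            have hza : z ≠ a := by rintro rfl; exact hnab hz.symm
            have hW : (Walk.cons adj1 (Walk.cons adj2
                (Walk.cons hz Walk.nil)) : G.Walk a z).IsPath := by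
              rw [Walk.isPath_def]
              simp [Walk.support_cons, adj1.ne, hab, Ne.symm hza, adj2.ne,
                Ne.symm hzx, hz.ne]
            have h1 : d a z = w s(a, x) + (w s(x, y) + (w s(y, z) + 0)) := by
              rw [d_eq_walk hG hd _ hW]
              simp only [Walk.edges_cons, Walk.edges_nil, List.map_cons,
                List.map_nil, List.sum_cons, List.sum_nil]
            have hW2 : (Walk.cons hz Walk.nil : G.Walk y z).IsPath := by
              rw [Walk.cons_isPath_iff]
              exact ⟨Walk.IsPath.nil, by simp [hz.ne]⟩
            have h2 : d y z = w s(y, z) := by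
              rw [d_eq_walk hG hd _ hW2]
              simp
            have := (H1 z hza hzb).2
            linarith
          have hdegb : G.degree y = 1 := by
            rw [← G.card_neighborFinset_eq_degree]
            rw [show G.neighborFinset y = {x} from
              Finset.eq_singleton_iff_unique_mem.2
                ⟨(G.mem_neighborFinset y x).2 adj2.symm,
                 fun z hzm => keyb z ((G.mem_neighborFinset y z).1 hzm)⟩]
            simp
          exact ⟨hdega, hdegb, x, adj1, adj2.symm⟩
        · -- two distinct interior vertices x, y: contradiction
          exfalso
          have hxy : x ≠ y := by
            rintro rfl
            exact hxq' q'.start_mem_support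
          have hxp : x ∈ (Walk.cons adj1 (Walk.cons adj2 q')).support := by
            simp
          have hyq : y ∈ (Walk.cons adj2 q').support := by
            simp
          have hyp : y ∈ (Walk.cons adj1 (Walk.cons adj2 q')).support := by
            simp
          have s1 : d a b = d a x + d x b := d_split hG hd _ hp hxp
          have s2 : d x b = d x y + d y b := d_split hG hd _ hq hyq
          have s3 : d a b = d a y + d y b := d_split hG hd _ hp hyp
          have s4 : d b x = d x b := d_symm hG hd b x
          have s5 : d b y = d y b := d_symm hG hd b y
          have hpos : 0 < d x y := d_pos hG hw hd hxy
          have := H2 x y hxa hxb hya hyb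
          linarith
  · rintro ⟨hda, hdb, x, hax, hbx⟩
    have hw1 : 0 < w s(a, x) := hw _ (G.mem_edgeSet.mpr hax)
    have hw2 : 0 < w s(b, x) := hw _ (G.mem_edgeSet.mpr hbx)
    have hdac : ∀ c, c ≠ a → d a c = w s(a, x) + d x c :=
      fun c hc => d_leaf hG hd hda hax hc
    have hdbc : ∀ c, c ≠ b → d b c = w s(b, x) + d x c :=
      fun c hc => d_leaf hG hd hdb hbx hc
    have hdab : d a b = w s(a, x) + w s(b, x) := by
      rw [hdac b hab.symm, d_symm hG hd x b, hdbc x hbx.ne', d_self hG hd, add_zero]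
    constructor
    · intro c hca hcb
      rw [hdac c hca, hdbc c hcb, hdab]
      constructor <;> linarith
    · intro c c' hca hcb hca' hcb'
      rw [hdac c hca, hdbc c hcb, hdac c' hca', hdbc c' hcb']
      ring
end
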